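/- Let (Y₁, d₁) and (Y₂, d₂) be metric spaces with product Y = Y₁ × Y₂ carrying the ℓ² product metric. Fix μ₁, μ₂ ∈ [0,1] with μ₁² + μ₂² = 1, base points o₁ ∈ Y₁, o₂ ∈ Y₂, and geodesic rays γ₁, γ̂₁ from o₁ in Y₁ and γ₂, γ̂₂ from o₂ in Y₂ (unit speed). Suppose lim_{t→∞} (2μᵢt − dᵢ(γᵢ(μᵢ t), γ̂ᵢ(μᵢ t))) = 2aᵢ exists and is finite for i = 1, 2. Then lim_{t→∞} (t − (1/2)·√(d₁(γ₁(μ₁t), γ̂₁(μ₁t))² + d₂(γ₂(μ₂t), γ̂₂(μ₂t))²)) = μ₁a₁ + μ₂a₂. -/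

import Mathlib

open Filter

lemma aux_gromov (μ₁ μ₂ a₁ a₂ : ℝ) (hμ : μ₁^2 + μ₂^2 = 1) (d₁ d₂ : ℝ → ℝ)
    (hd₁ : ∀ t, 0 ≤ d₁ t) (hd₂ : ∀ t, 0 ≤ d₂ t)
    (h₁ : Tendsto (fun t : ℝ => 2*μ₁*t - d₁ t) atTop (nhds (2*a₁)))
    (h₂ : Tendsto (fun t : ℝ => 2*μ₂*t - d₂ t) atTop (nhds (2*a₂))) :
    Tendsto (fun t : ℝ => t - (1/2) * Real.sqrt (d₁ t ^ 2 + d₂ t ^ 2)) atTop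
      (nhds (μ₁*a₁ + μ₂*a₂)) := by
  have h0 : ∀ᶠ t : ℝ in atTop, (1:ℝ) ≤ t := eventually_ge_atTop 1
  have hinv : Tendsto (fun t : ℝ => t⁻¹) atTop (nhds 0) := tendsto_inv_atTop_zero
  -- dᵢ/(2t) → μᵢ
  have hr : ∀ (μ a : ℝ) (d : ℝ → ℝ),
      Tendsto (fun t : ℝ => 2*μ*t - d t) atTop (nhds (2*a)) →
      Tendsto (fun t : ℝ => d t / (2*t)) atTop (nhds μ) := by
    intro μ a d h
    have key : Tendsto (fun t : ℝ => μ - (2*μ*t - d t) * t⁻¹ / 2) atTop (nhds μ) := by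
      have := (h.mul hinv).div_const 2
      simpa using tendsto_const_nhds.sub this
    refine key.congr' ?_
    filter_upwards [h0] with t ht
    have ht0 : t ≠ 0 := by linarith
    field_simp
    ring
  have hr1 := hr μ₁ a₁ d₁ h₁
  have hr2 := hr μ₂ a₂ d₂ h₂
  -- S/(2t) → 1
  have hsum : Tendsto (fun t : ℝ => (d₁ t/(2*t))^2 + (d₂ t/(2*t))^2) atTop (nhds 1) := by
    have := (hr1.pow 2).add (hr2.pow 2)
    rwa [hμ] at this
  have hS : Tendsto (fun t : ℝ => Real.sqrt (d₁ t ^ 2 + d₂ t ^ 2) / (2*t)) atTop (nhds 1) := by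
    have hc : Tendsto (fun t : ℝ => Real.sqrt ((d₁ t/(2*t))^2 + (d₂ t/(2*t))^2)) atTop
        (nhds 1) := by
      have := (Real.continuous_sqrt.tendsto 1).comp hsum
      simpa [Function.comp_def] using this
    refine hc.congr' ?_
    filter_upwards [h0] with t ht
    have ht0 : (0:ℝ) < 2*t := by linarith
    rw [show (d₁ t/(2*t))^2 + (d₂ t/(2*t))^2 = (d₁ t^2 + d₂ t^2) * ((2*t)⁻¹)^2 from by ring,
      Real.sqrt_mul (by positivity), Real.sqrt_sq (by positivity), div_eq_mul_inv]
  -- numerator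
  have hN : Tendsto (fun t : ℝ => μ₁*(2*μ₁*t - d₁ t) + μ₂*(2*μ₂*t - d₂ t)
      - ((2*μ₁*t - d₁ t)^2 + (2*μ₂*t - d₂ t)^2) * (4*t)⁻¹) atTop
      (nhds (2*(μ₁*a₁ + μ₂*a₂))) := by
    have hz : Tendsto (fun t : ℝ => ((2*μ₁*t - d₁ t)^2 + (2*μ₂*t - d₂ t)^2) * (4*t)⁻¹)
        atTop (nhds 0) := by
      have h4 : Tendsto (fun t : ℝ => (4*t)⁻¹) atTop (nhds 0) := by
        simpa [mul_inv, mul_comm] using hinv.mul_const ((4:ℝ)⁻¹)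
      have := ((h₁.pow 2).add (h₂.pow 2)).mul h4
      simpa using this
    have := (((h₁.const_mul μ₁).add (h₂.const_mul μ₂)).sub hz)
    convert this using 2 <;> ring
  -- combine
  have hden : Tendsto (fun t : ℝ => 1 + Real.sqrt (d₁ t ^ 2 + d₂ t ^ 2) / (2*t)) atTop
      (nhds 2) := by
    have := hS.const_add (1:ℝ)
    norm_num at this
    exact this
  have hfin := hN.div hden (by norm_num)
  have : (2*(μ₁*a₁ + μ₂*a₂))/2 = μ₁*a₁ + μ₂*a₂ := by ring
  rw [this] at hfin
  refine hfin.congr' ?_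
  filter_upwards [h0] with t ht
  have ht0 : (0:ℝ) < t := by linarith
  have hSnn : 0 ≤ Real.sqrt (d₁ t ^ 2 + d₂ t ^ 2) := Real.sqrt_nonneg _
  have hS2 : Real.sqrt (d₁ t ^ 2 + d₂ t ^ 2) ^ 2 = d₁ t ^ 2 + d₂ t ^ 2 :=
    Real.sq_sqrt (by positivity)
  have hdenpos : 0 < 1 + Real.sqrt (d₁ t ^ 2 + d₂ t ^ 2)/(2*t) := by positivity
  have e1 : μ₁*(2*μ₁*t - d₁ t) + μ₂*(2*μ₂*t - d₂ t)
      - ((2*μ₁*t - d₁ t)^2 + (2*μ₂*t - d₂ t)^2) * (4*t)⁻¹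
      = t - (d₁ t^2 + d₂ t^2) * (4*t)⁻¹ := by
    have ht0' : t ≠ 0 := ne_of_gt ht0
    field_simp
    linear_combination (4*t^2) * hμ
  have e2 : t - 1/2 * Real.sqrt (d₁ t ^ 2 + d₂ t ^ 2)
      = (t - Real.sqrt (d₁ t ^ 2 + d₂ t ^ 2) ^ 2 * (4*t)⁻¹)
        / (1 + Real.sqrt (d₁ t ^ 2 + d₂ t ^ 2)/(2*t)) := by
    rw [eq_div_iff (ne_of_gt hdenpos)]
    have ht0' : t ≠ 0 := ne_of_gt ht0
    field_simp
    linear_combination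
  rw [Pi.div_apply, e1, e2, hS2]


/-- The Gromov product on the ideal boundary of an `ℓ²` product of two metric spaces
decomposes as `μ₁ a₁ + μ₂ a₂`, where `aᵢ` are the Gromov products in the factors. -/
theorem gromov_product_product_space {Y₁ Y₂ : Type*} [MetricSpace Y₁] [MetricSpace Y₂]
    (μ₁ μ₂ : ℝ) (hμ₁ : μ₁ ∈ Set.Icc (0:ℝ) 1) (hμ₂ : μ₂ ∈ Set.Icc (0:ℝ) 1)
    (hμ : μ₁^2 + μ₂^2 = 1)
    (o₁ : Y₁) (o₂ : Y₂) (γ₁ γ₁' : ℝ → Y₁) (γ₂ γ₂' : ℝ → Y₂)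
    (hγ₁0 : γ₁ 0 = o₁) (hγ₁'0 : γ₁' 0 = o₁) (hγ₂0 : γ₂ 0 = o₂) (hγ₂'0 : γ₂' 0 = o₂)
    (hγ₁ : ∀ s t : ℝ, 0 ≤ s → 0 ≤ t → dist (γ₁ s) (γ₁ t) = |s - t|)
    (hγ₁' : ∀ s t : ℝ, 0 ≤ s → 0 ≤ t → dist (γ₁' s) (γ₁' t) = |s - t|)
    (hγ₂ : ∀ s t : ℝ, 0 ≤ s → 0 ≤ t → dist (γ₂ s) (γ₂ t) = |s - t|)
    (hγ₂' : ∀ s t : ℝ, 0 ≤ s → 0 ≤ t → dist (γ₂' s) (γ₂' t) = |s - t|)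
    (a₁ a₂ : ℝ)
    (h₁ : Tendsto (fun t : ℝ => 2*μ₁*t - dist (γ₁ (μ₁*t)) (γ₁' (μ₁*t))) atTop (nhds (2*a₁)))
    (h₂ : Tendsto (fun t : ℝ => 2*μ₂*t - dist (γ₂ (μ₂*t)) (γ₂' (μ₂*t))) atTop (nhds (2*a₂))) :
    Tendsto (fun t : ℝ => t - (1/2) *
        Real.sqrt ((dist (γ₁ (μ₁*t)) (γ₁' (μ₁*t)))^2 + (dist (γ₂ (μ₂*t)) (γ₂' (μ₂*t)))^2))
      atTop (nhds (μ₁*a₁ + μ₂*a₂)) :=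
  aux_gromov μ₁ μ₂ a₁ a₂ hμ _ _ (fun t => dist_nonneg) (fun t => dist_nonneg) h₁ h₂
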